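/- Let d ≥ 1. There is a constant c > 0 depending only on d such that P(S) ≥ c|S|^{(d−1)/d} for every bounded nonempty set S ⊆ ℝ^d. -/

import Mathlib

open MeasureTheory Set Metric

/-- `P₀(S)` : the essential infimum over `t > 0` of the `(d−1)`-dimensional Hausdorff
measure of the topological boundary of the open `t`-neighborhood of `S`. -/
noncomputable def P0 {d : ℕ} (S : Set (EuclideanSpace ℝ (Fin d))) : ENNReal :=
  essInf (fun t : ℝ => μH[(d : ℝ) - 1] (frontier (thickening t S)))
    (volume.restrict (Ioi (0 : ℝ)))

/-- `P(S) = inf {P₀(T) : T bounded, S ⊆ T}`, a 'minimal perimeter' of `S`. -/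
noncomputable def Pm {d : ℕ} (S : Set (EuclideanSpace ℝ (Fin d))) : ENNReal :=
  ⨅ (T : Set (EuclideanSpace ℝ (Fin d))) (_ : Bornology.IsBounded T) (_ : S ⊆ T), P0 T

open scoped ENNReal NNReal

noncomputable section IsoperimetryAux


def projF {n : ℕ} (i : Fin (n+1)) (x : Fin (n+1) → ℝ) : Fin n → ℝ := fun j => x (i.succAbove j)

lemma continuous_projF {n : ℕ} (i : Fin (n+1)) : Continuous (projF i) :=
  continuous_pi fun _ => continuous_apply _

def slc {n : ℕ} (A : Set (Fin (n+1) → ℝ)) (t : ℝ) : Set (Fin n → ℝ) :=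
  {y | Fin.insertNth (Fin.last n) t y ∈ A}

lemma volume_eq_lintegral_slc {n : ℕ} {A : Set (Fin (n+1) → ℝ)} (hA : MeasurableSet A) :
    volume A = ∫⁻ t : ℝ, volume (slc A t) := by
  have hmp := (volume_preserving_piFinSuccAbove (fun _ : Fin (n+1) => ℝ) (Fin.last n)).symm
  have hpre : (MeasurableEquiv.piFinSuccAbove (fun _ : Fin (n+1) => ℝ) (Fin.last n)).symm ⁻¹' A
      = {p : ℝ × (Fin n → ℝ) | Fin.insertNth (Fin.last n) p.1 p.2 ∈ A} := by
    ext p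
    simp [MeasurableEquiv.piFinSuccAbove_symm_apply, Fin.insertNthEquiv]
  rw [← hmp.measure_preimage hA.nullMeasurableSet, hpre, Measure.volume_eq_prod,
    Measure.prod_apply]
  · rfl
  · have : MeasurableSet ((MeasurableEquiv.piFinSuccAbove
        (fun _ : Fin (n+1) => ℝ) (Fin.last n)).symm ⁻¹' A) :=
      (MeasurableEquiv.piFinSuccAbove (fun _ : Fin (n+1) => ℝ) (Fin.last n)).symm.measurable hA
    rwa [hpre] at this

lemma measurable_volume_slc {n : ℕ} {A : Set (Fin (n+1) → ℝ)} (hA : MeasurableSet A) :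
    Measurable fun t : ℝ => volume (slc A t) := by
  have hms : MeasurableSet {p : ℝ × (Fin n → ℝ) | Fin.insertNth (Fin.last n) p.1 p.2 ∈ A} := by
    have : MeasurableSet ((MeasurableEquiv.piFinSuccAbove
        (fun _ : Fin (n+1) => ℝ) (Fin.last n)).symm ⁻¹' A) :=
      (MeasurableEquiv.piFinSuccAbove (fun _ : Fin (n+1) => ℝ) (Fin.last n)).symm.measurable hA
    have hpre : (MeasurableEquiv.piFinSuccAbove (fun _ : Fin (n+1) => ℝ) (Fin.last n)).symm ⁻¹' A
        = {p : ℝ × (Fin n → ℝ) | Fin.insertNth (Fin.last n) p.1 p.2 ∈ A} := by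
      ext p
      simp [MeasurableEquiv.piFinSuccAbove_symm_apply, Fin.insertNthEquiv]
    rwa [hpre] at this
  exact measurable_measure_prodMk_left hms

lemma slc_subset_projF {n : ℕ} (A : Set (Fin (n+1) → ℝ)) (t : ℝ) :
    slc A t ⊆ projF (Fin.last n) '' A := by
  rintro y hy
  exact ⟨Fin.insertNth (Fin.last n) t y, hy, funext fun j => by
    simp [projF, Fin.insertNth_apply_succAbove]⟩

lemma isCompact_slc {n : ℕ} {A : Set (Fin (n+1) → ℝ)} (hA : IsCompact A) (t : ℝ) :
    IsCompact (slc A t) := by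
  refine (hA.image (continuous_projF (Fin.last n))).of_isClosed_subset ?_ (slc_subset_projF A t)
  exact hA.isClosed.preimage (Continuous.finInsertNth _ continuous_const continuous_id)

lemma projF_slc {m : ℕ} (K : Set (Fin (m+2) → ℝ)) (j : Fin (m+1)) (t : ℝ) :
    projF j '' (slc K t) ⊆ slc (projF j.castSucc '' K) t := by
  rintro _ ⟨y, hy, rfl⟩
  refine ⟨Fin.insertNth (Fin.last (m+1)) t y, hy, ?_⟩
  funext k
  refine Fin.lastCases ?_ (fun k' => ?_) k
  · have h1 : (j.castSucc).succAbove (Fin.last m) = Fin.last (m+1) := by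
      rw [Fin.succAbove_castSucc_of_le _ _ (Fin.le_last j), Fin.succ_last]
    simp [projF, h1, Fin.insertNth_apply_same]
  · have h2 : (j.castSucc).succAbove k'.castSucc = (j.succAbove k').castSucc :=
      Fin.castSucc_succAbove_castSucc
    have e1 : ((Fin.last (m+1)).insertNth t y : Fin (m+2) → ℝ) ((j.succAbove k').castSucc)
        = y (j.succAbove k') := by
      rw [← Fin.succAbove_last_apply (j.succAbove k'), Fin.insertNth_apply_succAbove]
    have e2 : ((Fin.last m).insertNth t (projF j y) : Fin (m+1) → ℝ) (k'.castSucc)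
        = projF j y k' := by
      rw [← Fin.succAbove_last_apply k', Fin.insertNth_apply_succAbove]
    show ((Fin.last (m+1)).insertNth t y : Fin (m+2) → ℝ) (j.castSucc.succAbove k'.castSucc)
      = ((Fin.last m).insertNth t (projF j y) : Fin (m+1) → ℝ) k'.castSucc
    rw [h2, e1, e2]
    rfl

/-- Weak Loomis–Whitney: the sum of the volumes of the `n+1` coordinate projections of a
compact nonempty set bounds `(volume K) ^ (n/(n+1))`. -/
lemma rpow_volume_le_sum_proj : ∀ (n : ℕ) (K : Set (Fin (n+1) → ℝ)), IsCompact K → K.Nonempty →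
    volume K ^ ((n : ℝ)/(n+1)) ≤ ∑ i : Fin (n+1), volume (projF i '' K) := by
  intro n
  induction n with
  | zero =>
    intro K _ hne
    have h1 : projF (0 : Fin 1) '' K = univ := by
      obtain ⟨x, hx⟩ := hne
      refine eq_univ_of_forall fun z => ?_
      rw [Subsingleton.elim z (projF 0 x)]
      exact ⟨x, hx, rfl⟩
    simp only [Nat.cast_zero, zero_div, ENNReal.rpow_zero]
    rw [Fin.sum_univ_one, h1,
      show (volume : Measure (Fin 0 → ℝ)) = Measure.pi (fun _ => volume) from rfl,
      Measure.pi_univ]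
    simp
  | succ m ih =>
    intro K hK hne
    set V := volume K with hV
    have hVtop : V ≠ ⊤ := hK.measure_lt_top.ne
    have hexp : ((m + 1 : ℕ) : ℝ) / ((m + 1 : ℕ) + 1) = ((m:ℝ)+1)/((m:ℝ)+2) := by
      push_cast; ring
    rw [hexp]
    rcases eq_or_ne V 0 with hV0 | hV0
    · rw [hV0, ENNReal.zero_rpow_of_pos (by positivity)]
      exact zero_le
    set P := projF (Fin.last (m+1)) '' K with hP
    have hPc : IsCompact P := hK.image (continuous_projF _)
    set a := volume P with ha
    have hatop : a ≠ ⊤ := hPc.measure_lt_top.ne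
    -- pointwise slice bound
    have key : ∀ t : ℝ, volume (slc K t) ≤
        a ^ ((1:ℝ)/(m+1)) * ∑ j : Fin (m+1), volume (slc (projF j.castSucc '' K) t) := by
      intro t
      rcases eq_or_ne (volume (slc K t)) 0 with h0 | h0
      · rw [h0]; exact zero_le
      have hcomp : IsCompact (slc K t) := isCompact_slc hK t
      have hnet : (slc K t).Nonempty := nonempty_of_measure_ne_zero h0
      have htop : volume (slc K t) ≠ ⊤ := hcomp.measure_lt_top.ne
      calc volume (slc K t)
          = volume (slc K t) ^ ((1:ℝ)/(m+1)) * volume (slc K t) ^ ((m:ℝ)/(m+1)) := by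
            rw [← ENNReal.rpow_add _ _ h0 htop,
              show (1:ℝ)/((m:ℝ)+1) + (m:ℝ)/((m:ℝ)+1) = 1 by field_simp; ring, ENNReal.rpow_one]
        _ ≤ a ^ ((1:ℝ)/(m+1)) * ∑ j : Fin (m+1), volume (projF j '' slc K t) := by
            refine mul_le_mul' ?_ ?_
            · exact ENNReal.rpow_le_rpow (measure_mono (slc_subset_projF K t)) (by positivity)
            · exact ih (slc K t) hcomp hnet
        _ ≤ _ := by
            refine mul_le_mul_right (Finset.sum_le_sum fun j _ => ?_) _
            exact measure_mono (projF_slc K j t)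
    -- integrate the slice bound
    have hQm : ∀ j : Fin (m+1), MeasurableSet (projF j.castSucc '' K) :=
      fun j => (hK.image (continuous_projF _)).isClosed.measurableSet
    have int2 : V ≤ a ^ ((1:ℝ)/(m+1)) * ∑ j : Fin (m+1), volume (projF j.castSucc '' K) := by
      calc V = ∫⁻ t, volume (slc K t) := volume_eq_lintegral_slc hK.isClosed.measurableSet
        _ ≤ ∫⁻ t, a ^ ((1:ℝ)/(m+1)) *
              ∑ j : Fin (m+1), volume (slc (projF j.castSucc '' K) t) := lintegral_mono key
        _ = a ^ ((1:ℝ)/(m+1)) *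
              ∫⁻ t, ∑ j : Fin (m+1), volume (slc (projF j.castSucc '' K) t) :=
            lintegral_const_mul' _ _ (ENNReal.rpow_ne_top_of_nonneg (by positivity) hatop)
        _ = a ^ ((1:ℝ)/(m+1)) *
              ∑ j : Fin (m+1), ∫⁻ t, volume (slc (projF j.castSucc '' K) t) := by
            rw [lintegral_finset_sum _ (fun j _ => measurable_volume_slc (hQm j))]
        _ = _ := by
            rw [Finset.sum_congr rfl fun j _ => (volume_eq_lintegral_slc (hQm j)).symm]
    -- split the full sum
    have hsplit : ∑ i : Fin (m+2), volume (projF i '' K)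
        = (∑ j : Fin (m+1), volume (projF j.castSucc '' K)) + a := by
      rw [Fin.sum_univ_castSucc]
    rcases le_or_gt (V ^ (((m:ℝ)+1)/((m:ℝ)+2))) a with hcase | hcase
    · rw [hsplit]; exact hcase.trans le_add_self
    · -- a < V ^ p
      have ha0 : a ≠ 0 := by
        intro h0
        apply hV0
        refine le_antisymm ?_ zero_le
        calc V ≤ a ^ ((1:ℝ)/(m+1)) * ∑ j : Fin (m+1), volume (projF j.castSucc '' K) := int2
          _ = 0 := by
            rw [h0, ENNReal.zero_rpow_of_pos (by positivity), zero_mul]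
      have h1 : a ^ ((1:ℝ)/(m+1)) ≤ V ^ ((1:ℝ)/((m:ℝ)+2)) := by
        have := ENNReal.rpow_le_rpow hcase.le (by positivity : (0:ℝ) ≤ 1/((m:ℝ)+1))
        rwa [← ENNReal.rpow_mul, show (((m:ℝ)+1)/((m:ℝ)+2)) * ((1:ℝ)/((m:ℝ)+1)) = 1/((m:ℝ)+2)
          by field_simp] at this
      have h2 : V ^ ((1:ℝ)/((m:ℝ)+2)) * V ^ (((m:ℝ)+1)/((m:ℝ)+2)) = V := by
        rw [← ENNReal.rpow_add _ _ hV0 hVtop,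
          show (1:ℝ)/((m:ℝ)+2) + ((m:ℝ)+1)/((m:ℝ)+2) = 1 by field_simp; ring, ENNReal.rpow_one]
      have h3 : V ^ ((1:ℝ)/((m:ℝ)+2)) * V ^ (((m:ℝ)+1)/((m:ℝ)+2)) ≤
          V ^ ((1:ℝ)/((m:ℝ)+2)) * ∑ j : Fin (m+1), volume (projF j.castSucc '' K) := by
        rw [h2]
        exact int2.trans (mul_le_mul_left h1 _)
      have hz0 : V ^ ((1:ℝ)/((m:ℝ)+2)) ≠ 0 := by
        simp [ENNReal.rpow_eq_zero_iff, hV0, hVtop]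
      have hzt : V ^ ((1:ℝ)/((m:ℝ)+2)) ≠ ⊤ :=
        ENNReal.rpow_ne_top_of_nonneg (by positivity) hVtop
      have h4 : V ^ (((m:ℝ)+1)/((m:ℝ)+2)) ≤ ∑ j : Fin (m+1), volume (projF j.castSucc '' K) :=
        (ENNReal.mul_le_mul_iff_right hz0 hzt).mp h3
      rw [hsplit]
      exact h4.trans le_self_add


section Euclid

variable {d : ℕ}


variable {d : ℕ}

def updE {d : ℕ} (x : EuclideanSpace ℝ (Fin d)) (i : Fin d) (t : ℝ) :
    EuclideanSpace ℝ (Fin d) := WithLp.toLp 2 (Function.update x i t)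

lemma dist_coord_le (x y : EuclideanSpace ℝ (Fin d)) (i : Fin d) :
    dist (x i) (y i) ≤ dist x y := by
  rw [EuclideanSpace.dist_eq]
  rw [show dist (x i) (y i) = Real.sqrt (dist (x i) (y i) ^ 2) from (Real.sqrt_sq dist_nonneg).symm]
  exact Real.sqrt_le_sqrt (Finset.single_le_sum (f := fun j => dist (x j) (y j) ^ 2)
    (fun j _ => sq_nonneg _) (Finset.mem_univ i))

def projE {n : ℕ} (i : Fin (n+1)) (x : EuclideanSpace ℝ (Fin (n+1))) : Fin n → ℝ :=
  fun j => x (i.succAbove j)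

lemma lipschitz_projE {n : ℕ} (i : Fin (n+1)) : LipschitzWith 1 (projE (n := n) i) :=
  LipschitzWith.of_dist_le_mul fun x y => by
    rw [NNReal.coe_one, one_mul]
    exact (dist_pi_le_iff dist_nonneg).2 fun j => dist_coord_le x y _

lemma lipschitz_update (x : EuclideanSpace ℝ (Fin d)) (i : Fin d) :
    LipschitzWith 1 (fun t : ℝ => updE x i t) :=
  LipschitzWith.of_dist_le_mul fun s t => by
    rw [NNReal.coe_one, one_mul, EuclideanSpace.dist_eq]
    have hsum : ∑ j, dist (updE x i s j) (updE x i t j) ^ 2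
        = dist s t ^ 2 := by
      simp only [updE, PiLp.toLp_apply]
      rw [Finset.sum_eq_single i]
      · rw [Function.update_self, Function.update_self]
      · intro j _ hj
        rw [Function.update_of_ne hj, Function.update_of_ne hj, dist_self]
        norm_num
      · intro h; exact absurd (Finset.mem_univ i) h
    rw [hsum, Real.sqrt_sq dist_nonneg]

lemma exists_mem_frontier_update {U : Set (EuclideanSpace ℝ (Fin d))} (hU : IsOpen U)
    (hb : Bornology.IsBounded U) {x : EuclideanSpace ℝ (Fin d)} (hx : x ∈ U) (i : Fin d) :
    ∃ s : ℝ, updE x i s ∈ frontier U := by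
  set g : ℝ → EuclideanSpace ℝ (Fin d) := fun t => updE x i t with hg
  have hcont : Continuous g := (lipschitz_update x i).continuous
  set A : Set ℝ := g ⁻¹' U with hA
  have hxA : x i ∈ A := by
    simp only [hA, mem_preimage, hg, updE, Function.update_eq_self, WithLp.toLp_ofLp]
    exact hx
  have hAne : A.Nonempty := ⟨x i, hxA⟩
  obtain ⟨R, hR⟩ := hb.subset_ball x
  have hbdd : BddAbove A := by
    refine ⟨x i + R, fun t ht => ?_⟩
    have h1 : dist (g t) x < R := mem_ball.mp (hR ht)
    have h2 : dist t (x i) ≤ dist (g t) x := by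
      have h := dist_coord_le (g t) x i
      simp only [hg, updE, PiLp.toLp_apply, Function.update_self] at h
      exact h
    have := h2.trans_lt h1
    rw [Real.dist_eq, abs_lt] at this
    linarith [this.1, this.2]
  set s := sSup A with hs
  refine ⟨s, ?_⟩
  rw [hU.frontier_eq]
  constructor
  · have h1 : s ∈ closure A := csSup_mem_closure hAne hbdd
    have h2 : g s ∈ g '' closure A := mem_image_of_mem g h1
    have h3 : g '' closure A ⊆ closure (g '' A) := image_closure_subset_closure_image hcont
    exact closure_mono (image_preimage_subset g U) (h3 h2)
  · intro hmem
    have hsA : s ∈ A := hmem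
    obtain ⟨ε, hε, hball⟩ := Metric.isOpen_iff.mp (hU.preimage hcont) s hsA
    have : s + ε/2 ∈ A := hball (by
      have heq : s + ε/2 - s = ε/2 := by ring
      rw [mem_ball, Real.dist_eq, heq, abs_of_pos (by linarith)]
      linarith)
    have := le_csSup hbdd this
    linarith

lemma frontier_bound {n : ℕ} (S T : Set (EuclideanSpace ℝ (Fin (n+1))))
    (hS : Bornology.IsBounded S) (hSne : S.Nonempty) (hT : Bornology.IsBounded T) (hST : S ⊆ T)
    {t : ℝ} (ht : 0 < t) :
    volume S ^ ((n:ℝ)/(n+1)) ≤ (n+1 : ℕ) * μH[(n:ℝ)] (frontier (thickening t T)) := by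
  set U := thickening t T with hU
  set F := frontier U with hF
  set K := closure S with hK
  have hKc : IsCompact K := isCompact_of_isClosed_isBounded isClosed_closure hS.closure
  have hKne : K.Nonempty := hSne.closure
  have hKU : K ⊆ U := (closure_mono hST).trans (closure_subset_thickening ht T)
  have hUb : Bornology.IsBounded U := hT.thickening
  have hUo : IsOpen U := isOpen_thickening
  -- projections of K are contained in projections of the frontier
  have hsub : ∀ i : Fin (n+1), projE i '' K ⊆ projE i '' F := by
    rintro i _ ⟨z, hz, rfl⟩
    obtain ⟨s, hs⟩ := exists_mem_frontier_update hUo hUb (hKU hz) i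
    exact ⟨updE z i s, hs,
      funext fun j => Function.update_of_ne (Fin.succAbove_ne i j) _ _⟩
  -- each projection of F has volume at most μH[n] F
  have hterm : ∀ i : Fin (n+1), volume (projE i '' K) ≤ μH[(n:ℝ)] F := by
    intro i
    have h2 : (volume : Measure (Fin n → ℝ)) = μH[(n:ℝ)] := by
      rw [← hausdorffMeasure_pi_real (ι := Fin n), Fintype.card_fin]
    have h3 := (lipschitz_projE i).hausdorffMeasure_image_le
      (by positivity : (0:ℝ) ≤ (n:ℝ)) (s := F)
    calc volume (projE i '' K) ≤ volume (projE i '' F) := measure_mono (hsub i)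
      _ = μH[(n:ℝ)] (projE i '' F) := by rw [h2]
      _ ≤ (1:ℝ≥0∞) ^ (n:ℝ) * μH[(n:ℝ)] F := h3
      _ = μH[(n:ℝ)] F := by rw [ENNReal.one_rpow, one_mul]
  -- transfer K to the pi space and apply (weak) Loomis--Whitney
  set eE := (MeasurableEquiv.toLp 2 (Fin (n+1) → ℝ)).symm with heE
  have heEcont : Continuous (⇑eE) := by
    exact PiLp.continuous_ofLp 2 (fun _ : Fin (n+1) => ℝ)
  have hKpic : IsCompact (⇑eE '' K) := hKc.image heEcont
  have hvolK : volume (⇑eE '' K) = volume K := by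
    rw [MeasurableEquiv.image_eq_preimage_symm]
    exact (MeasurePreserving.symm eE
      (EuclideanSpace.volume_preserving_symm_measurableEquiv_toLp (Fin (n+1)))).measure_preimage
      hKc.isClosed.measurableSet.nullMeasurableSet
  have himg : ∀ i : Fin (n+1), projF i '' (⇑eE '' K) = projE i '' K := by
    intro i
    rw [← image_comp]
    rfl
  have hLW := rpow_volume_le_sum_proj n (⇑eE '' K) hKpic (hKne.image _)
  calc volume S ^ ((n:ℝ)/(n+1))
      ≤ volume K ^ ((n:ℝ)/(n+1)) :=
        ENNReal.rpow_le_rpow (measure_mono subset_closure) (by positivity)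
    _ = volume (⇑eE '' K) ^ ((n:ℝ)/(n+1)) := by rw [hvolK]
    _ ≤ ∑ i : Fin (n+1), volume (projF i '' (⇑eE '' K)) := hLW
    _ = ∑ i : Fin (n+1), volume (projE i '' K) := Finset.sum_congr rfl fun i _ => by rw [himg i]
    _ ≤ ∑ _i : Fin (n+1), μH[(n:ℝ)] F := Finset.sum_le_sum fun i _ => hterm i
    _ = (n+1 : ℕ) * μH[(n:ℝ)] F := by
        rw [Finset.sum_const, Finset.card_univ, Fintype.card_fin, nsmul_eq_mul]

end Euclid

end IsoperimetryAux

/-- Isoperimetric-type inequality: `P(S) ≳ |S|^{(d−1)/d}`. -/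
theorem Pm_ge_measure_rpow (d : ℕ) (hd : 1 ≤ d) :
    ∃ c : ℝ, 0 < c ∧ ∀ S : Set (EuclideanSpace ℝ (Fin d)),
      Bornology.IsBounded S → S.Nonempty →
        ENNReal.ofReal c * volume S ^ (((d : ℝ) - 1) / d) ≤ Pm S := by
  obtain ⟨n, rfl⟩ : ∃ n, d = n + 1 := ⟨d - 1, (Nat.succ_pred_eq_of_pos hd).symm⟩
  refine ⟨1/((n:ℝ)+1), by positivity, ?_⟩
  intro S hS hSne
  have hc1 : (((n+1 : ℕ) : ℝ)) - 1 = (n : ℝ) := by push_cast; ring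
  have hc2 : (((n+1 : ℕ) : ℝ)) = (n : ℝ) + 1 := by push_cast; ring
  rw [Pm]
  refine le_iInf fun T => le_iInf fun hT => le_iInf fun hST => ?_
  rw [P0, hc1, hc2]
  refine le_essInf_of_ae_le _ ?_
  refine (ae_restrict_iff' measurableSet_Ioi).2 (Filter.Eventually.of_forall fun t ht => ?_)
  have hmain := frontier_bound S T hS hSne hT hST (mem_Ioi.mp ht)
  calc ENNReal.ofReal (1/((n:ℝ)+1)) * volume S ^ ((n:ℝ) / ((n:ℝ)+1))
      ≤ ENNReal.ofReal (1/((n:ℝ)+1)) *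
        ((n+1 : ℕ) * μH[(n:ℝ)] (frontier (thickening t T))) := mul_le_mul_right hmain _
    _ = μH[(n:ℝ)] (frontier (thickening t T)) := by
        rw [← mul_assoc, show ((n+1 : ℕ) : ℝ≥0∞) = ENNReal.ofReal ((n+1 : ℕ) : ℝ) from
          (ENNReal.ofReal_natCast _).symm, ← ENNReal.ofReal_mul (by positivity),
          show (1/((n:ℝ)+1)) * ((n+1 : ℕ) : ℝ) = 1 by push_cast; field_simp,
          ENNReal.ofReal_one, one_mul]
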